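/- Let b > 0, a ≥ 0, R_t > 0, β > 0, λ₁ > 0, R_max > 0, set λ₀ = λ₁/(b·β), and assume 1/(λ₀·2^{R_max·(β+1)}) > a (hence also 1/λ₀ > a). Set M₁ = √(R_t/(1/λ₀ − a)) and M₂ = √(R_t/(1/(λ₀·2^{R_max·(β+1)}) − a)). For each M ≠ 0, define g(ξ) = (1 + ½·b·M²·ξ)^{−β} + λ₁·½·ξ·(R_t + a·M²), ξ₁(M) = (2/(b·M²))·[(1/λ₀ · M²/(R_t + a·M²))^{1/(β+1)} − 1], and ξ₂(M) = (2/(b·M²))·(2^{R_max} − 1). Then the unique minimizer of g over the interval [0, ξ₂(M)] is: 0 when 0 < |M| ≤ M₁; ξ₁(M) when M₁ < |M| < M₂; and ξ₂(M) when |M| ≥ M₂. -/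

import Mathlib

/-- `x` is the unique minimizer of `f` on the set `s`. -/
def IsUniqueMinOn (f : ℝ → ℝ) (s : Set ℝ) (x : ℝ) : Prop :=
  x ∈ s ∧ (∀ y ∈ s, f x ≤ f y) ∧ ∀ z ∈ s, (∀ y ∈ s, f z ≤ f y) → z = x

lemma aux_unique_min (f : ℝ → ℝ) (c d β B xs x : ℝ)
    (hc : 0 < c) (hd : 0 < d) (hβ : 0 < β)
    (hf : ∀ ξ : ℝ, f ξ = (1 + c * ξ) ^ (-β) + d * ξ)
    (hx0 : 0 ≤ x) (hxB : x ≤ B)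
    (hxsK : 0 < 1 + c * xs) (hK : (1 + c * xs) ^ (β + 1) = β * c / d)
    (hlow : ∀ ξ ∈ Set.Ioo (0:ℝ) x, ξ < xs)
    (hhigh : ∀ ξ ∈ Set.Ioo x B, xs < ξ) :
    IsUniqueMinOn f (Set.Icc 0 B) x := by
  have hβ1 : (0:ℝ) < β + 1 := by linarith
  have hXpos : ∀ ξ : ℝ, 0 ≤ ξ → 0 < 1 + c * ξ := by
    intro ξ hξ; nlinarith [mul_nonneg hc.le hξ]
  have hder : ∀ ξ : ℝ, 0 < 1 + c * ξ →
      HasDerivAt f (d - β * c * (1 + c * ξ) ^ (-(β + 1))) ξ := by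
    intro ξ hpos
    have h1 : HasDerivAt (fun ξ : ℝ => 1 + c * ξ) c ξ := by
      simpa using ((hasDerivAt_id ξ).const_mul c).const_add 1
    have h2 : HasDerivAt (fun y : ℝ => y ^ (-β)) ((-β) * (1 + c * ξ) ^ (-β - 1)) (1 + c * ξ) :=
      Real.hasDerivAt_rpow_const (Or.inl (ne_of_gt hpos))
    have h3 : HasDerivAt (fun ξ : ℝ => (1 + c * ξ) ^ (-β))
        ((-β) * (1 + c * ξ) ^ (-β - 1) * c) ξ := by have := h2.comp ξ h1; exact this
    have h4 : HasDerivAt (fun ξ : ℝ => d * ξ) d ξ := by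
      simpa using (hasDerivAt_id ξ).const_mul d
    have h5 : HasDerivAt (fun ξ : ℝ => (1 + c * ξ) ^ (-β) + d * ξ) ((-β) * (1 + c * ξ) ^ (-β - 1) * c + d) ξ := h3.add h4
    have hfe : f = fun ξ : ℝ => (1 + c * ξ) ^ (-β) + d * ξ := funext hf
    rw [hfe]
    convert h5 using 1
    rw [show (-(β + 1) : ℝ) = -β - 1 by ring]
    ring
  have hsign : ∀ ξ : ℝ, 0 ≤ ξ →
      (ξ < xs → d - β * c * (1 + c * ξ) ^ (-(β + 1)) < 0) ∧
      (xs < ξ → 0 < d - β * c * (1 + c * ξ) ^ (-(β + 1))) := by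
    intro ξ hξ
    have h1 : 0 < 1 + c * ξ := hXpos ξ hξ
    have hX : (0:ℝ) < (1 + c * ξ) ^ (β + 1) := Real.rpow_pos_of_pos h1 _
    have hneg : (1 + c * ξ) ^ (-(β + 1)) = ((1 + c * ξ) ^ (β + 1))⁻¹ :=
      Real.rpow_neg h1.le _
    constructor
    · intro hlt
      have h2 : 1 + c * ξ < 1 + c * xs := by nlinarith [mul_lt_mul_of_pos_left hlt hc]
      have h3 : (1 + c * ξ) ^ (β + 1) < (1 + c * xs) ^ (β + 1) :=
        Real.rpow_lt_rpow h1.le h2 hβ1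
      rw [hK] at h3
      have h4 : d * (1 + c * ξ) ^ (β + 1) < β * c := by
        have := (lt_div_iff₀ hd).mp h3; linarith
      have h5 : d < β * c / (1 + c * ξ) ^ (β + 1) := (lt_div_iff₀ hX).mpr h4
      rw [hneg, ← div_eq_mul_inv]
      linarith
    · intro hlt
      have h2 : 1 + c * xs < 1 + c * ξ := by nlinarith [mul_lt_mul_of_pos_left hlt hc]
      have h3 : (1 + c * xs) ^ (β + 1) < (1 + c * ξ) ^ (β + 1) :=
        Real.rpow_lt_rpow hxsK.le h2 hβ1
      rw [hK] at h3
      have h4 : β * c < d * (1 + c * ξ) ^ (β + 1) := by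
        have := (div_lt_iff₀ hd).mp h3; linarith
      have h5 : β * c / (1 + c * ξ) ^ (β + 1) < d := (div_lt_iff₀ hX).mpr (by linarith)
      rw [hneg, ← div_eq_mul_inv]
      linarith
  have hcont : ∀ y z : ℝ, 0 ≤ y → ContinuousOn f (Set.Icc y z) := by
    intro y z hy ξ hξ
    exact ((hder ξ (hXpos ξ (hy.trans hξ.1))).continuousAt).continuousWithinAt
  have hanti : StrictAntiOn f (Set.Icc 0 x) := by
    apply strictAntiOn_of_deriv_neg (convex_Icc 0 x) (hcont 0 x le_rfl)
    intro ξ hξ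
    rw [interior_Icc] at hξ
    have h0 : 0 ≤ ξ := hξ.1.le
    rw [(hder ξ (hXpos ξ h0)).deriv]
    exact (hsign ξ h0).1 (hlow ξ hξ)
  have hmono : StrictMonoOn f (Set.Icc x B) := by
    apply strictMonoOn_of_deriv_pos (convex_Icc x B) (hcont x B hx0)
    intro ξ hξ
    rw [interior_Icc] at hξ
    have h0 : 0 ≤ ξ := hx0.trans hξ.1.le
    rw [(hder ξ (hXpos ξ h0)).deriv]
    exact (hsign ξ h0).2 (hhigh ξ hξ)
  have hmemx : x ∈ Set.Icc (0:ℝ) B := ⟨hx0, hxB⟩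
  have hmin : ∀ y ∈ Set.Icc (0:ℝ) B, f x ≤ f y := by
    intro y hy
    rcases le_or_gt y x with h | h
    · rcases eq_or_lt_of_le h with rfl | h'
      · exact le_rfl
      · exact (hanti ⟨hy.1, h⟩ ⟨hx0, le_rfl⟩ h').le
    · exact (hmono ⟨le_rfl, hxB⟩ ⟨h.le, hy.2⟩ h).le
  refine ⟨hmemx, hmin, ?_⟩
  intro z hz hzmin
  rcases lt_trichotomy z x with h | h | h
  · exact absurd (hzmin x hmemx) (not_le.mpr (hanti ⟨hz.1, h.le⟩ ⟨hx0, le_rfl⟩ h))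
  · exact h
  · exact absurd (hzmin x hmemx) (not_le.mpr (hmono ⟨le_rfl, hxB⟩ ⟨h.le, hz.2⟩ h))


set_option maxHeartbeats 1000000 in
/-- Pointwise form of the paper's Theorem 1 (optimal current control for
QoS-aware MI communication): for each mutual-inductance state `M ≠ 0`, the
unique minimizer of the per-state Lagrangian
`g(ξ) = (1 + ½·b·M²·ξ)^{−β} + λ₁·½·ξ·(R_t + a·M²)` over `[0, ξ₂(M)]` is `0`
when `0 < |M| ≤ M₁`, the water-filling value `ξ₁(M)` when `M₁ < |M| < M₂`, and
the peak value `ξ₂(M)` when `|M| ≥ M₂`. -/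
theorem mi_optimal_current_control
    (b a Rt β lam₁ Rmax : ℝ)
    (hb : 0 < b) (ha : 0 ≤ a) (hRt : 0 < Rt) (hβ : 0 < β) (hlam₁ : 0 < lam₁)
    (hRmax : 0 < Rmax)
    (lam₀ : ℝ) (hlam₀ : lam₀ = lam₁ / (b * β))
    (hinv : a < 1 / (lam₀ * (2 : ℝ) ^ (Rmax * (β + 1))))
    (M₁ M₂ : ℝ)
    (hM₁ : M₁ = Real.sqrt (Rt / (1 / lam₀ - a)))
    (hM₂ : M₂ = Real.sqrt (Rt / (1 / (lam₀ * (2 : ℝ) ^ (Rmax * (β + 1))) - a)))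
    (g : ℝ → ℝ → ℝ)
    (hg : ∀ M ξ : ℝ, g M ξ =
        (1 + (1 / 2) * b * M ^ 2 * ξ) ^ (-β) + lam₁ * (1 / 2) * ξ * (Rt + a * M ^ 2))
    (ξ₁ ξ₂ : ℝ → ℝ)
    (hξ₁ : ∀ M : ℝ, M ≠ 0 → ξ₁ M = (2 / (b * M ^ 2)) *
        ((1 / lam₀ * (M ^ 2 / (Rt + a * M ^ 2))) ^ (1 / (β + 1)) - 1))
    (hξ₂ : ∀ M : ℝ, M ≠ 0 → ξ₂ M = (2 / (b * M ^ 2)) * ((2 : ℝ) ^ Rmax - 1)) :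
    ∀ M : ℝ, M ≠ 0 →
      ((|M| ≤ M₁ → IsUniqueMinOn (g M) (Set.Icc 0 (ξ₂ M)) 0) ∧
       (M₁ < |M| ∧ |M| < M₂ → IsUniqueMinOn (g M) (Set.Icc 0 (ξ₂ M)) (ξ₁ M)) ∧
       (M₂ ≤ |M| → IsUniqueMinOn (g M) (Set.Icc 0 (ξ₂ M)) (ξ₂ M))) := by
  intro M hM
  have hβ1 : (0:ℝ) < β + 1 := by linarith
  have hβ1' : (β + 1 : ℝ) ≠ 0 := hβ1.ne'
  have hM2 : (0:ℝ) < M ^ 2 := by positivity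
  have hlam₀pos : 0 < lam₀ := by rw [hlam₀]; positivity
  have hξ₁M := hξ₁ M hM
  have hξ₂M := hξ₂ M hM
  set T : ℝ := (2:ℝ) ^ (Rmax * (β + 1)) with hT_def
  set E : ℝ := (2:ℝ) ^ Rmax with hE_def
  have hEpos : 0 < E := Real.rpow_pos_of_pos two_pos _
  have hE1 : 1 < E := by
    rw [hE_def]
    exact (Real.one_lt_rpow_iff_of_pos two_pos).mpr (Or.inl ⟨one_lt_two, hRmax⟩)
  have hT1 : 1 < T := by
    rw [hT_def]
    exact (Real.one_lt_rpow_iff_of_pos two_pos).mpr (Or.inl ⟨one_lt_two, by positivity⟩)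
  have hET : E ^ (β + 1) = T := by
    rw [hE_def, hT_def]
    exact (Real.rpow_mul (by norm_num) Rmax (β + 1)).symm
  have ha1 : a < 1 / lam₀ := by
    have h1 : lam₀ ≤ lam₀ * T := le_mul_of_one_le_right hlam₀pos.le hT1.le
    exact hinv.trans_le (one_div_le_one_div_of_le hlam₀pos h1)
  have hd1 : 0 < 1 / lam₀ - a := sub_pos.mpr ha1
  have hd2 : 0 < 1 / (lam₀ * T) - a := sub_pos.mpr hinv
  have hlam₀T : 0 < lam₀ * T := by positivity
  have hM₁sq : M₁ ^ 2 = Rt / (1 / lam₀ - a) := by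
    rw [hM₁, Real.sq_sqrt (by positivity)]
  have hM₂sq : M₂ ^ 2 = Rt / (1 / (lam₀ * T) - a) := by
    rw [hM₂, Real.sq_sqrt (by positivity)]
  set c : ℝ := (1 / 2) * b * M ^ 2 with hc_def
  have hc : 0 < c := by positivity
  set R : ℝ := Rt + a * M ^ 2 with hR_def
  have hR : 0 < R := by positivity
  set d : ℝ := lam₁ * (1 / 2) * R with hd_def
  have hd : 0 < d := by positivity
  have hfg : ∀ ξ : ℝ, g M ξ = (1 + c * ξ) ^ (-β) + d * ξ := by
    intro ξ
    rw [hg, hc_def, hd_def, hR_def]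
    ring_nf
  set A : ℝ := M ^ 2 / (lam₀ * R) with hA_def
  have hApos : 0 < A := by positivity
  have hAK : 1 / lam₀ * (M ^ 2 / R) = A := by
    rw [hA_def]; field_simp
  have hβcd : β * c / d = A := by
    rw [hA_def, hc_def, hd_def, hlam₀]
    field_simp
  set K : ℝ := A ^ (1 / (β + 1)) with hK_def
  have hKpos : 0 < K := Real.rpow_pos_of_pos hApos _
  have hKpow : K ^ (β + 1) = A := by
    rw [hK_def, ← Real.rpow_mul hApos.le, one_div, inv_mul_cancel₀ hβ1', Real.rpow_one]
  rw [hAK] at hξ₁M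
  have hc2 : c * (2 / (b * M ^ 2)) = 1 := by
    rw [hc_def]; field_simp
  have h1cξ₁ : 1 + c * ξ₁ M = K := by
    rw [hξ₁M]; linear_combination (K - 1) * hc2
  have h1cξ₂ : 1 + c * ξ₂ M = E := by
    rw [hξ₂M]; linear_combination (E - 1) * hc2
  have hcξ₁ : c * ξ₁ M = K - 1 := by linarith
  have hξ₁eq : ξ₁ M = (K - 1) / c := by
    rw [eq_div_iff hc.ne']; linear_combination hcξ₁
  have hξ₂eq : ξ₂ M = (E - 1) / c := by
    rw [eq_div_iff hc.ne']; linear_combination h1cξ₂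
  have hξ₂pos : 0 < ξ₂ M := by
    rw [hξ₂eq]; exact div_pos (by linarith) hc
  have hxsK : 0 < 1 + c * ξ₁ M := by rw [h1cξ₁]; exact hKpos
  have hK_eq : (1 + c * ξ₁ M) ^ (β + 1) = β * c / d := by
    rw [h1cξ₁, hKpow, hβcd]
  refine ⟨?_, ?_, ?_⟩
  · -- case |M| ≤ M₁
    intro h
    have hsq : M ^ 2 ≤ Rt / (1 / lam₀ - a) := by
      have h1 : |M| ^ 2 ≤ M₁ ^ 2 := pow_le_pow_left₀ (abs_nonneg M) h 2
      rwa [sq_abs, hM₁sq] at h1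
    have h1 : M ^ 2 * (1 / lam₀ - a) ≤ Rt := (le_div_iff₀ hd1).mp hsq
    have hA1 : A ≤ 1 := by
      rw [hA_def, div_le_one (by positivity), hR_def]
      have h2 := mul_le_mul_of_nonneg_left h1 hlam₀pos.le
      rw [show lam₀ * (M ^ 2 * (1 / lam₀ - a)) = M ^ 2 - lam₀ * a * M ^ 2 by
        field_simp] at h2
      have h4 : lam₀ * (Rt + a * M ^ 2) = lam₀ * Rt + lam₀ * a * M ^ 2 := by ring
      linarith
    have hK1 : K ≤ 1 := by
      rw [hK_def]; exact Real.rpow_le_one hApos.le hA1 (by positivity)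
    have hξ₁nonpos : ξ₁ M ≤ 0 := by
      rw [hξ₁eq]
      exact div_nonpos_of_nonpos_of_nonneg (by linarith) hc.le
    exact aux_unique_min (g M) c d β (ξ₂ M) (ξ₁ M) 0 hc hd hβ hfg le_rfl hξ₂pos.le
      hxsK hK_eq (fun ξ hξ => absurd (hξ.1.trans hξ.2) (lt_irrefl 0))
      (fun ξ hξ => lt_of_le_of_lt hξ₁nonpos hξ.1)
  · -- case M₁ < |M| < M₂
    rintro ⟨h1', h2'⟩
    have hsq1 : Rt / (1 / lam₀ - a) < M ^ 2 := by
      have h1 : M₁ ^ 2 < |M| ^ 2 := by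
        apply pow_lt_pow_left₀ h1' (by rw [hM₁]; positivity) (by norm_num)
      rwa [sq_abs, hM₁sq] at h1
    have hsq2 : M ^ 2 < Rt / (1 / (lam₀ * T) - a) := by
      have h1 : |M| ^ 2 < M₂ ^ 2 := pow_lt_pow_left₀ h2' (abs_nonneg M) (by norm_num)
      rwa [sq_abs, hM₂sq] at h1
    have hA1 : 1 < A := by
      rw [hA_def, lt_div_iff₀ (by positivity), hR_def]
      have h1 : Rt < M ^ 2 * (1 / lam₀ - a) := (div_lt_iff₀ hd1).mp hsq1
      have h2 := mul_lt_mul_of_pos_left h1 hlam₀pos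
      rw [show lam₀ * (M ^ 2 * (1 / lam₀ - a)) = M ^ 2 - lam₀ * a * M ^ 2 by
        field_simp] at h2
      have h4 : lam₀ * (Rt + a * M ^ 2) = lam₀ * Rt + lam₀ * a * M ^ 2 := by ring
      linarith
    have hAT : A < T := by
      rw [hA_def, div_lt_iff₀ (by positivity), hR_def]
      have h1 : M ^ 2 * (1 / (lam₀ * T) - a) < Rt := (lt_div_iff₀ hd2).mp hsq2
      have h2 := mul_lt_mul_of_pos_left h1 hlam₀T
      rw [show (lam₀ * T) * (M ^ 2 * (1 / (lam₀ * T) - a))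
          = M ^ 2 - lam₀ * T * a * M ^ 2 by field_simp] at h2
      have h4 : T * (lam₀ * (Rt + a * M ^ 2))
          = lam₀ * T * Rt + lam₀ * T * a * M ^ 2 := by ring
      linarith
    have hK1 : 1 < K := by
      rw [hK_def]
      exact (Real.one_lt_rpow_iff_of_pos hApos).mpr (Or.inl ⟨hA1, by positivity⟩)
    have hKE : K < E := by
      have h1 : A ^ (1 / (β + 1)) < (E ^ (β + 1)) ^ (1 / (β + 1)) := by
        rw [hET]
        exact Real.rpow_lt_rpow hApos.le hAT (by positivity)
      rwa [← Real.rpow_mul hEpos.le, mul_one_div, div_self hβ1', Real.rpow_one, ← hK_def] at h1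
    have hξ₁pos : 0 < ξ₁ M := by
      rw [hξ₁eq]; exact div_pos (by linarith) hc
    have hξ₁lt : ξ₁ M < ξ₂ M := by
      rw [hξ₁eq, hξ₂eq]
      exact (div_lt_div_iff_of_pos_right hc).mpr (by linarith)
    exact aux_unique_min (g M) c d β (ξ₂ M) (ξ₁ M) (ξ₁ M) hc hd hβ hfg hξ₁pos.le hξ₁lt.le
      hxsK hK_eq (fun ξ hξ => hξ.2) (fun ξ hξ => hξ.1)
  · -- case M₂ ≤ |M|
    intro h
    have hsq : Rt / (1 / (lam₀ * T) - a) ≤ M ^ 2 := by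
      have h1 : M₂ ^ 2 ≤ |M| ^ 2 := pow_le_pow_left₀ (by rw [hM₂]; positivity) h 2
      rwa [sq_abs, hM₂sq] at h1
    have hTA : T ≤ A := by
      rw [hA_def, le_div_iff₀ (by positivity), hR_def]
      have h1 : Rt ≤ M ^ 2 * (1 / (lam₀ * T) - a) := (div_le_iff₀ hd2).mp hsq
      have h2 := mul_le_mul_of_nonneg_left h1 hlam₀T.le
      rw [show (lam₀ * T) * (M ^ 2 * (1 / (lam₀ * T) - a))
          = M ^ 2 - lam₀ * T * a * M ^ 2 by field_simp] at h2
      have h4 : T * (lam₀ * (Rt + a * M ^ 2))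
          = lam₀ * T * Rt + lam₀ * T * a * M ^ 2 := by ring
      linarith
    have hEK : E ≤ K := by
      have h1 : (E ^ (β + 1)) ^ (1 / (β + 1)) ≤ A ^ (1 / (β + 1)) := by
        rw [hET]
        exact Real.rpow_le_rpow (by positivity) hTA (by positivity)
      rwa [← Real.rpow_mul hEpos.le, mul_one_div, div_self hβ1', Real.rpow_one, ← hK_def] at h1
    have hBξ₁ : ξ₂ M ≤ ξ₁ M := by
      rw [hξ₁eq, hξ₂eq]
      exact (div_le_div_iff_of_pos_right hc).mpr (by linarith)
    exact aux_unique_min (g M) c d β (ξ₂ M) (ξ₁ M) (ξ₂ M) hc hd hβ hfg hξ₂pos.le le_rfl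
      hxsK hK_eq (fun ξ hξ => hξ.2.trans_le hBξ₁) (fun ξ hξ => absurd (hξ.1.trans hξ.2) (lt_irrefl _))
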